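/- arXiv:0804.2233 — 2 statements merged into one kernel-verified Lean document; each statement's English description precedes it below -/
import Mathlib

section
/- Let n ∈ ℤ[ω] with N(n) squarefree and coprime to 3, where ω = e^{2πi/3} and N denotes the norm. Then N(n) is squarefree in ℤ if and only if n is squarefree in ℤ[ω] and n has no rational prime divisor. -/
/-- The ring of Eisenstein integers `ℤ[ω]`, represented as pairs `a + b·ω`. -/
@[ext]
structure Eisenstein where
  a : ℤ
  b : ℤ

namespace Eisenstein

instance : Zero Eisenstein := ⟨⟨0, 0⟩⟩
instance : One Eisenstein := ⟨⟨1, 0⟩⟩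
instance : Add Eisenstein := ⟨fun x y => ⟨x.a + y.a, x.b + y.b⟩⟩
instance : Neg Eisenstein := ⟨fun x => ⟨-x.a, -x.b⟩⟩
instance : Mul Eisenstein :=
  ⟨fun x y => ⟨x.a * y.a - x.b * y.b, x.a * y.b + x.b * y.a - x.b * y.b⟩⟩

@[simp] lemma zero_a : (0 : Eisenstein).a = 0 := rfl
@[simp] lemma zero_b : (0 : Eisenstein).b = 0 := rfl
@[simp] lemma one_a : (1 : Eisenstein).a = 1 := rfl
@[simp] lemma one_b : (1 : Eisenstein).b = 0 := rfl
@[simp] lemma add_a (x y : Eisenstein) : (x + y).a = x.a + y.a := rfl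
@[simp] lemma add_b (x y : Eisenstein) : (x + y).b = x.b + y.b := rfl
@[simp] lemma neg_a (x : Eisenstein) : (-x).a = -x.a := rfl
@[simp] lemma neg_b (x : Eisenstein) : (-x).b = -x.b := rfl
@[simp] lemma mul_a (x y : Eisenstein) : (x * y).a = x.a * y.a - x.b * y.b := rfl
@[simp] lemma mul_b (x y : Eisenstein) : (x * y).b = x.a * y.b + x.b * y.a - x.b * y.b := rfl

instance : CommRing Eisenstein where
  add_assoc x y z := by ext <;> simp <;> ring
  zero_add x := by ext <;> simp
  add_zero x := by ext <;> simp
  add_comm x y := by ext <;> simp <;> ring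
  neg_add_cancel x := by ext <;> simp
  mul_assoc x y z := by ext <;> simp <;> ring
  one_mul x := by ext <;> simp
  mul_one x := by ext <;> simp
  left_distrib x y z := by ext <;> simp <;> ring
  right_distrib x y z := by ext <;> simp <;> ring
  mul_comm x y := by ext <;> simp <;> ring
  zero_mul x := by ext <;> simp
  mul_zero x := by ext <;> simp
  nsmul := nsmulRec
  zsmul := zsmulRec

/-- The primitive cube root of unity `ω` in `ℤ[ω]`. -/
def ω : Eisenstein := ⟨0, 1⟩

/-- Complex conjugation on `ℤ[ω]`. -/
def conj (x : Eisenstein) : Eisenstein := ⟨x.a - x.b, -x.b⟩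

/-- The norm `N(a + bω) = a² − ab + b²`. -/
def norm (x : Eisenstein) : ℤ := x.a ^ 2 - x.a * x.b + x.b ^ 2

/-- The embedding of `ℤ[ω]` into `ℂ`, with `ω ↦ e^{2πi/3}`. -/
noncomputable def toC (x : Eisenstein) : ℂ :=
  (x.a : ℂ) + (x.b : ℂ) * Complex.exp (2 * Real.pi * Complex.I / 3)

/-- `R` is a complete system of residues modulo `n` in `ℤ[ω]`. -/
def IsResidueSystem (n : Eisenstein) (R : Finset Eisenstein) : Prop :=
  ∀ x : Eisenstein, ∃! d, d ∈ R ∧ n ∣ x - d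

/-- `ě(z) = exp(2πi(z + z̄))`. -/
noncomputable def eE (z : ℂ) : ℂ :=
  Complex.exp (2 * Real.pi * Complex.I * (z + (starRingEnd ℂ) z))

/-- `χ` is the cubic residue symbol `(m/n)₃` on `ℤ[ω]` (with values `0, 1, ω, ω²` in `ℤ[ω]`):
it is completely multiplicative in both arguments and is determined at prime moduli `π ∤ 3` by
`(m/π)₃ ≡ m^{(N(π)−1)/3} (mod π)`, `(m/π)₃ ∈ {1, ω, ω²}` for `π ∤ m`, and `(m/π)₃ = 0` for
`π ∣ m`. -/
def IsCubicResidueSymbol (χ : Eisenstein → Eisenstein → Eisenstein) : Prop :=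
  (∀ m₁ m₂ n, χ (m₁ * m₂) n = χ m₁ n * χ m₂ n) ∧
  (∀ m n₁ n₂, χ m (n₁ * n₂) = χ m n₁ * χ m n₂) ∧
  (∀ m π : Eisenstein, Prime π → ¬ π ∣ 3 → π ∣ m → χ m π = 0) ∧
  (∀ m π : Eisenstein, Prime π → ¬ π ∣ 3 → ¬ π ∣ m →
    χ m π ∈ ({1, ω, ω ^ 2} : Set Eisenstein) ∧
      π ∣ m ^ ((norm π - 1) / 3).toNat - χ m π)

/-- The generalized cubic Gauss sum `g(r,n) = Σ_{x mod n} (x/n)₃ ě(rx/n)`, computed with respect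
to a complete residue system `R` modulo `n`. -/
noncomputable def gSum (χ : Eisenstein → Eisenstein → Eisenstein) (r n : Eisenstein)
    (R : Finset Eisenstein) : ℂ :=
  ∑ x ∈ R, toC (χ x n) * eE (toC r * toC x / toC n)

end Eisenstein


namespace Eisenstein

instance : DecidableEq Eisenstein := fun x y =>
  decidable_of_iff (x.a = y.a ∧ x.b = y.b)
    ⟨fun h => by ext; exacts [h.1, h.2], fun h => by subst h; exact ⟨rfl, rfl⟩⟩

lemma intCast_def (k : ℤ) : (k : Eisenstein) = ⟨k, 0⟩ := by
  induction k using Int.induction_on with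
  | zero => ext <;> simp
  | succ n ih => rw [Int.cast_add, Int.cast_one, ih]; ext <;> simp
  | pred n ih => rw [Int.cast_sub, Int.cast_one, ih]; ext <;> simp [sub_eq_add_neg]

@[simp] lemma intCast_a (k : ℤ) : (k : Eisenstein).a = k := by rw [intCast_def]
@[simp] lemma intCast_b (k : ℤ) : (k : Eisenstein).b = 0 := by rw [intCast_def]

@[simp] lemma natCast_a (k : ℕ) : (k : Eisenstein).a = k := by
  rw [← Int.cast_natCast (R := Eisenstein)]; exact intCast_a _
@[simp] lemma natCast_b (k : ℕ) : (k : Eisenstein).b = 0 := by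
  rw [← Int.cast_natCast (R := Eisenstein)]; exact intCast_b _

@[simp] lemma sub_a (x y : Eisenstein) : (x - y).a = x.a - y.a := by
  rw [sub_eq_add_neg, sub_eq_add_neg]; simp
@[simp] lemma sub_b (x y : Eisenstein) : (x - y).b = x.b - y.b := by
  rw [sub_eq_add_neg, sub_eq_add_neg]; simp

lemma norm_mul (x y : Eisenstein) : norm (x * y) = norm x * norm y := by
  simp only [norm, mul_a, mul_b]; ring

lemma norm_conj (x : Eisenstein) : norm (conj x) = norm x := by
  simp only [norm, conj]; ring

lemma mul_conj (x : Eisenstein) : x * conj x = (norm x : Eisenstein) := by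
  rw [intCast_def]; ext <;> simp [conj, norm] <;> ring

lemma conj_mul (x y : Eisenstein) : conj (x * y) = conj x * conj y := by
  ext <;> simp [conj] <;> ring

@[simp] lemma conj_conj (x : Eisenstein) : conj (conj x) = x := by
  ext <;> simp [conj]

lemma conj_natCast (k : ℕ) : conj (k : Eisenstein) = k := by
  ext <;> simp [conj]

lemma conj_dvd {x y : Eisenstein} (h : x ∣ y) : conj x ∣ conj y := by
  obtain ⟨z, rfl⟩ := h; exact ⟨conj z, conj_mul x z⟩

@[simp] lemma conj_eq_zero {x : Eisenstein} : conj x = 0 ↔ x = 0 := by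
  constructor
  · intro h; have := congrArg conj h; rw [conj_conj] at this; rw [this]; ext <;> simp [conj]
  · rintro rfl; ext <;> simp [conj]

lemma norm_nonneg (x : Eisenstein) : 0 ≤ norm x := by
  have := sq_nonneg (2 * x.a - x.b); have := sq_nonneg x.b
  simp only [norm]; nlinarith

lemma norm_eq_zero_iff {x : Eisenstein} : norm x = 0 ↔ x = 0 := by
  constructor
  · intro h
    have h1 := sq_nonneg (2 * x.a - x.b); have h2 := sq_nonneg x.b
    have hb : x.b = 0 := by simp only [norm] at h; nlinarith
    have ha : x.a = 0 := by simp only [norm, hb] at h; nlinarith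
    ext <;> assumption
  · rintro rfl; simp [norm]

instance : Nontrivial Eisenstein :=
  ⟨0, 1, fun h => by have := congrArg Eisenstein.a h; simp at this⟩

instance : NoZeroDivisors Eisenstein := by
  constructor
  intro x y h
  have : norm x * norm y = 0 := by rw [← norm_mul, h]; simp [norm]
  rcases mul_eq_zero.mp this with h' | h'
  · exact Or.inl (norm_eq_zero_iff.mp h')
  · exact Or.inr (norm_eq_zero_iff.mp h')

instance : IsDomain Eisenstein := NoZeroDivisors.to_isDomain _

lemma isUnit_iff_norm {x : Eisenstein} : IsUnit x ↔ norm x = 1 := by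
  constructor
  · intro h
    obtain ⟨u, rfl⟩ := h
    have : norm (u : Eisenstein) * norm ((u⁻¹ : Eisensteinˣ) : Eisenstein) = 1 := by
      rw [← norm_mul]; simp [norm]
    have h1 : IsUnit (norm (u : Eisenstein)) := IsUnit.of_mul_eq_one _ this
    rcases Int.isUnit_iff.mp h1 with h | h
    · exact h
    · have := norm_nonneg (u : Eisenstein); omega
  · intro h
    refine IsUnit.of_mul_eq_one (a := x) (conj x) ?_
    rw [mul_conj, h]; rfl

lemma exists_qr (x y : Eisenstein) (hy : y ≠ 0) :
    ∃ q : Eisenstein, norm (x - q * y) < norm y := by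
  set d : ℤ := norm y with hd
  have hd0 : 0 < d := lt_of_le_of_ne (norm_nonneg y) (fun h => hy (norm_eq_zero_iff.mp h.symm))
  set z : Eisenstein := x * conj y with hz
  have hdQ : (0 : ℚ) < (d : ℚ) := by exact_mod_cast hd0
  have key : ∀ u : ℤ, 2 * |u - round ((u : ℚ) / d) * d| ≤ d := by
    intro u
    set r : ℤ := round ((u : ℚ) / d) with hr
    have h1 : |(u : ℚ) / d - r| ≤ 1 / 2 := abs_sub_round _
    have h2 : |(u : ℚ) - r * d| ≤ d / 2 := by
      calc |(u : ℚ) - r * d| = |(d : ℚ) * ((u : ℚ) / d - r)| := by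
            congr 1; field_simp; try ring
        _ = |(d : ℚ)| * |(u : ℚ) / d - r| := abs_mul _ _
        _ = d * |(u : ℚ) / d - r| := by rw [abs_of_pos hdQ]
        _ ≤ d * (1 / 2) := mul_le_mul_of_nonneg_left h1 hdQ.le
        _ = d / 2 := by ring
    have h3 : (2 : ℚ) * |(u : ℚ) - r * d| ≤ d := by linarith
    have h4 : ((2 * |u - r * d| : ℤ) : ℚ) ≤ ((d : ℤ) : ℚ) := by push_cast; exact h3
    exact_mod_cast h4
  set qa := round ((z.a : ℚ) / d)
  set qb := round ((z.b : ℚ) / d)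
  refine ⟨⟨qa, qb⟩, ?_⟩
  set q : Eisenstein := ⟨qa, qb⟩
  set s : ℤ := z.a - qa * d with hsdef
  set t : ℤ := z.b - qb * d with htdef
  have hs : 2 * |s| ≤ d := key z.a
  have ht : 2 * |t| ≤ d := key z.b
  have h1 : norm (x - q * y) * d = norm ⟨s, t⟩ := by
    have e1 : (x - q * y) * conj y = z - q * ((d : ℤ) : Eisenstein) := by
      rw [hz, hd, ← mul_conj y]; ring
    calc norm (x - q * y) * d = norm (x - q * y) * norm (conj y) := by rw [norm_conj, hd]
      _ = norm ((x - q * y) * conj y) := (norm_mul _ _).symm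
      _ = norm ⟨s, t⟩ := by rw [e1]; congr 1; ext <;> simp [q, hsdef, htdef] <;> ring
  have h2 : norm ⟨s, t⟩ * 4 ≤ 3 * (d * d) := by
    simp only [norm]
    nlinarith [abs_nonneg s, abs_nonneg t, sq_abs s, sq_abs t,
      abs_mul s t, neg_abs_le (s * t), le_abs_self (s * t),
      mul_le_mul hs ht (by positivity) hd0.le]
  nlinarith [h1, h2, hd0]

noncomputable instance : EuclideanDomain Eisenstein where
  quotient := fun x y => if h : y = 0 then 0 else Classical.choose (exists_qr x y h)
  quotient_zero := fun a => dif_pos rfl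
  remainder := fun x y => x - (if h : y = 0 then 0 else Classical.choose (exists_qr x y h)) * y
  quotient_mul_add_remainder_eq := by intro a b; ring
  r := fun a b => (norm a).natAbs < (norm b).natAbs
  r_wellFounded := (measure fun x : Eisenstein => (norm x).natAbs).wf
  remainder_lt := by
    intro a b hb
    simp only [dif_neg hb]
    have := Classical.choose_spec (exists_qr a b hb)
    exact Int.natAbs_lt_natAbs_of_nonneg_of_lt (norm_nonneg _) this
  mul_left_not_lt := by
    intro a b hb
    rw [not_lt, norm_mul, Int.natAbs_mul]
    have : 0 < (norm b).natAbs := by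
      rcases Nat.eq_zero_or_pos (norm b).natAbs with h | h
      · exact absurd (norm_eq_zero_iff.mp (Int.natAbs_eq_zero.mp h)) hb
      · exact h
    exact Nat.le_mul_of_pos_right _ this

lemma prime_conj {π : Eisenstein} (hπ : Prime π) : Prime (conj π) := by
  refine ⟨fun h => hπ.1 (conj_eq_zero.mp h), fun h => ?_, fun x y h => ?_⟩
  · apply hπ.2.1
    obtain ⟨u, hu⟩ := h.exists_right_inv
    exact IsUnit.of_mul_eq_one (a := π) (conj u) (by
      have := congrArg conj hu
      rw [conj_mul, conj_conj] at this
      rw [this]; ext <;> simp [conj])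
  · have h' : π ∣ conj x * conj y := by
      have := conj_dvd h
      rwa [conj_conj, conj_mul] at this
    rcases hπ.2.2 _ _ h' with h'' | h''
    · exact Or.inl (by have := conj_dvd h''; rwa [conj_conj] at this)
    · exact Or.inr (by have := conj_dvd h''; rwa [conj_conj] at this)

lemma cube_root_lemma {p : ℕ} [Fact p.Prime] (hp3 : p ≠ 3) {α : ZMod p}
    (hα : α ^ 2 - α + 1 = 0) : p % 3 = 1 := by
  have hp := (Fact.out : p.Prime)
  set ω : ZMod p := -α with hω
  have hω2 : ω ^ 2 + ω + 1 = 0 := by rw [hω]; linear_combination hα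
  have hω3 : ω ^ 3 = 1 := by linear_combination (ω - 1) * hω2
  have hω1 : ω ≠ 1 := by
    intro h
    rw [h] at hω2
    have h3 : ((3 : ℕ) : ZMod p) = 0 := by push_cast; linear_combination hω2
    have h4 := (ZMod.natCast_eq_zero_iff 3 p).mp h3
    exact hp3 ((Nat.prime_dvd_prime_iff_eq hp Nat.prime_three).mp h4)
  set u : (ZMod p)ˣ := Units.mkOfMulEqOne ω (ω ^ 2) (by rw [← hω3]; ring) with hu
  have hu3 : u ^ 3 = 1 := by
    ext
    rw [Units.val_pow_eq_pow_val]
    exact hω3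
  have hdvd : orderOf u ∣ 3 := orderOf_dvd_of_pow_eq_one hu3
  have horder : orderOf u = 3 := by
    rcases (Nat.dvd_prime Nat.prime_three).mp hdvd with h | h
    · exact absurd (congrArg Units.val (orderOf_eq_one_iff.mp h)) hω1
    · exact h
  have hcard : (3 : ℕ) ∣ Fintype.card (ZMod p)ˣ := horder ▸ orderOf_dvd_card
  rw [ZMod.card_units] at hcard
  have := hp.two_le
  omega

lemma exists_cube_root {p : ℕ} [Fact p.Prime] (hp1 : p % 3 = 1) :
    ∃ α : ZMod p, α ^ 2 - α + 1 = 0 := by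
  have hp := (Fact.out : p.Prime)
  have h3 : (3 : ℕ) ∣ Fintype.card (ZMod p)ˣ := by
    rw [ZMod.card_units]
    have := hp.two_le
    omega
  obtain ⟨x, hx⟩ := exists_prime_orderOf_dvd_card 3 h3
  set ω : ZMod p := (x : ZMod p) with hω
  have hω3 : ω ^ 3 = 1 := by
    have h := pow_orderOf_eq_one x
    rw [hx] at h
    have h' := congrArg Units.val h
    rw [Units.val_pow_eq_pow_val] at h'
    exact h'
  have hω1 : ω ≠ 1 := by
    intro h
    have : x = 1 := Units.ext h
    rw [this, orderOf_one] at hx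
    omega
  have key : ω ^ 2 + ω + 1 = 0 := by
    have h0 : (ω - 1) * (ω ^ 2 + ω + 1) = 0 := by linear_combination hω3
    rcases mul_eq_zero.mp h0 with h | h
    · exact absurd (sub_eq_zero.mp h) hω1
    · exact h
  exact ⟨-ω, by linear_combination key⟩

lemma dvd_of_dvd_norm {p : ℕ} (hp : p.Prime) (h3 : p % 3 = 2) {x : Eisenstein}
    (h : (p : ℤ) ∣ norm x) : (p : Eisenstein) ∣ x := by
  haveI : Fact p.Prime := ⟨hp⟩
  set A : ZMod p := ((x.a : ℤ) : ZMod p) with hA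
  set B : ZMod p := ((x.b : ℤ) : ZMod p) with hB
  have hAB : A ^ 2 - A * B + B ^ 2 = 0 := by
    have h0 := (ZMod.intCast_zmod_eq_zero_iff_dvd (norm x) p).mpr h
    rw [norm] at h0
    push_cast at h0
    rw [hA, hB]
    linear_combination h0
  have hB0 : B = 0 := by
    by_contra hBne
    have hBinv : B * B⁻¹ = 1 := mul_inv_cancel₀ hBne
    have hα : (A * B⁻¹) ^ 2 - (A * B⁻¹) + 1 = 0 := by
      linear_combination (B⁻¹) ^ 2 * hAB + (A * B⁻¹ - B * B⁻¹ - 1) * hBinv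
    have := cube_root_lemma (by omega) hα
    omega
  have hA0 : A = 0 := by
    rw [hB0] at hAB
    have h2 : A ^ 2 = 0 := by linear_combination hAB
    exact sq_eq_zero_iff.mp h2
  have hpa : (p : ℤ) ∣ x.a := (ZMod.intCast_zmod_eq_zero_iff_dvd x.a p).mp hA0
  have hpb : (p : ℤ) ∣ x.b := (ZMod.intCast_zmod_eq_zero_iff_dvd x.b p).mp hB0
  obtain ⟨c, hc⟩ := hpa
  obtain ⟨d, hd⟩ := hpb
  exact ⟨⟨c, d⟩, by ext <;> simp [hc, hd]⟩

lemma natCast_ne_zero {p : ℕ} (hp : 0 < p) : (p : Eisenstein) ≠ 0 := by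
  intro h
  have := congrArg Eisenstein.a h
  simp at this
  omega

lemma norm_natCast (p : ℕ) : norm (p : Eisenstein) = (p : ℤ) ^ 2 := by
  simp [norm]

lemma not_isUnit_natCast {p : ℕ} (hp : 2 ≤ p) : ¬ IsUnit (p : Eisenstein) := by
  rw [isUnit_iff_norm, norm_natCast]
  intro h
  have h2 : (2 : ℤ) ≤ (p : ℤ) := by exact_mod_cast hp
  nlinarith

lemma prime_of_two_mod_three {p : ℕ} (hp : p.Prime) (h3 : p % 3 = 2) :
    Prime (p : Eisenstein) := by
  refine ⟨natCast_ne_zero hp.pos, not_isUnit_natCast hp.two_le, ?_⟩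
  intro x y hxy
  obtain ⟨z, hz⟩ := hxy
  have hnorm : norm x * norm y = (p : ℤ) ^ 2 * norm z := by
    rw [← norm_mul, hz, norm_mul, norm_natCast]
  have hdvd : (p : ℤ) ∣ norm x * norm y := ⟨(p : ℤ) * norm z, by rw [hnorm]; ring⟩
  rcases (Nat.prime_iff_prime_int.mp hp).2.2 _ _ hdvd with h | h
  · exact Or.inl (dvd_of_dvd_norm hp h3 h)
  · exact Or.inr (dvd_of_dvd_norm hp h3 h)

lemma exists_prime_norm_eq {p : ℕ} (hp : p.Prime) (h1 : p % 3 = 1) :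
    ∃ π : Eisenstein, Prime π ∧ norm π = (p : ℤ) := by
  haveI : Fact p.Prime := ⟨hp⟩
  obtain ⟨α, hα⟩ := exists_cube_root h1
  set x : Eisenstein := ⟨(α.val : ℤ), 1⟩ with hx
  have hdvd : (p : ℤ) ∣ norm x := by
    rw [← ZMod.intCast_zmod_eq_zero_iff_dvd, norm]
    push_cast
    simp only [hx, Int.cast_natCast, ZMod.natCast_zmod_val]
    linear_combination hα
  have hndvd : ∀ y : Eisenstein, (y.b = 1 ∨ y.b = -1) → ¬ (p : Eisenstein) ∣ y := by
    rintro y hy ⟨z, hz⟩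
    have hb := congrArg Eisenstein.b hz
    simp only [mul_b, natCast_a, natCast_b] at hb
    have hdb : (p : ℤ) ∣ y.b := ⟨z.b, by linarith⟩
    have hd1 : (p : ℤ) ∣ 1 := by
      rcases hy with h | h
      · rwa [h] at hdb
      · rw [h] at hdb; exact (dvd_neg).mp hdb
    have := Int.le_of_dvd one_pos hd1
    have h2 := hp.two_le
    have : (2 : ℤ) ≤ (p : ℤ) := by exact_mod_cast h2
    omega
  have hpnotprime : ¬ Prime ((p : ℕ) : Eisenstein) := by
    intro hP
    have hd2 : (p : Eisenstein) ∣ x * conj x := by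
      rw [mul_conj]
      obtain ⟨k, hk⟩ := hdvd
      exact ⟨(k : Eisenstein), by rw [hk]; push_cast; ring⟩
    rcases hP.2.2 _ _ hd2 with h | h
    · exact hndvd x (Or.inl rfl) h
    · exact hndvd (conj x) (Or.inr rfl) h
  obtain ⟨π, hirr, hπdvd⟩ :=
    WfDvdMonoid.exists_irreducible_factor (not_isUnit_natCast hp.two_le)
      (natCast_ne_zero hp.pos)
  have hπ : Prime π := UniqueFactorizationMonoid.irreducible_iff_prime.mp hirr
  obtain ⟨c, hc⟩ := hπdvd
  have hnormeq : norm π * norm c = (p : ℤ) ^ 2 := by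
    rw [← norm_mul, ← hc, norm_natCast]
  have hna : (norm π).natAbs ∣ p ^ 2 := by
    have hdd : norm π ∣ (p : ℤ) ^ 2 := ⟨norm c, hnormeq.symm⟩
    have h6 := Int.natAbs_dvd_natAbs.mpr hdd
    simp only [Int.natAbs_pow, Int.natAbs_natCast] at h6
    exact h6
  obtain ⟨i, hi2, hieq⟩ := (Nat.dvd_prime_pow hp).mp hna
  have hnn : norm π = ((p ^ i : ℕ) : ℤ) := by
    rw [← hieq]; exact (Int.natAbs_of_nonneg (norm_nonneg π)).symm
  interval_cases i
  · exact absurd (isUnit_iff_norm.mpr (by simpa using hnn)) hirr.not_isUnit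
  · exact ⟨π, hπ, by simpa using hnn⟩
  · exfalso
    apply hpnotprime
    have hππ : norm π = (p : ℤ) ^ 2 := by rw [hnn]; push_cast; ring
    have hp2 : (0 : ℤ) < (p : ℤ) ^ 2 := by
      have := hp.pos
      positivity
    have hc1 : norm c = 1 := by
      have h5 := hnormeq
      rw [hππ] at h5
      exact mul_left_cancel₀ (ne_of_gt hp2) (by rw [mul_one]; exact h5)
    have hcu : IsUnit c := isUnit_iff_norm.mpr hc1
    exact Associated.prime ⟨hcu.unit, by rw [hcu.unit_spec]; exact hc.symm⟩ hπ

/-- Key step for the reverse direction. -/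
lemma no_sq {n : Eisenstein} (hsq : Squarefree n) {π : Eisenstein} {p : ℕ}
    (hπ : Prime π) (hππ : π * conj π = (p : Eisenstein)) (hπn : π ∣ n)
    (hp2 : ((p : Eisenstein)) ^ 2 ∣ n * conj n) (hnp : ¬ (p : Eisenstein) ∣ n) : False := by
  obtain ⟨m, hm⟩ := hπn
  have hπm : ¬ π ∣ m := by
    rintro ⟨k, hk⟩
    exact hπ.not_unit (hsq π ⟨k, by rw [hm, hk]; ring⟩)
  have heq : n * conj n = (p : Eisenstein) * (m * conj m) := by
    rw [hm, conj_mul, ← hππ]; ring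
  have hpne : (p : Eisenstein) ≠ 0 := by
    rw [← hππ]
    exact mul_ne_zero hπ.1 (fun h => hπ.1 (conj_eq_zero.mp h))
  have hdm : (p : Eisenstein) ∣ m * conj m := by
    have h2 : (p : Eisenstein) * (p : Eisenstein) ∣ (p : Eisenstein) * (m * conj m) := by
      rw [← heq, ← sq]; exact hp2
    exact (mul_dvd_mul_iff_left hpne).mp h2
  have hπdm : π ∣ m * conj m := dvd_trans ⟨conj π, hππ.symm⟩ hdm
  rcases hπ.2.2 _ _ hπdm with h | h
  · exact hπm h
  · have h' : conj π ∣ m := by have := conj_dvd h; rwa [conj_conj] at this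
    obtain ⟨k, hk⟩ := h'
    exact hnp ⟨k, by rw [hm, hk, ← hππ]; ring⟩

end Eisenstein

open Eisenstein in

/-- A Eisenstein integer `n` with norm coprime to 3 has squarefree norm if and only if `n` is
squarefree in `ℤ[ω]` and `n` has no rational prime divisor. -/
theorem statement_3 (n : Eisenstein) (h3 : IsCoprime (norm n) 3) :
    Squarefree (norm n) ↔
      Squarefree n ∧ ∀ p : ℕ, p.Prime → ¬ ((p : Eisenstein) ∣ n) := by
  constructor
  · intro hN
    constructor
    · intro x hx
      obtain ⟨k, hk⟩ := hx
      have : norm x * norm x ∣ norm n := ⟨norm k, by rw [hk, norm_mul, norm_mul]⟩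
      have hu := hN (norm x) this
      rcases Int.isUnit_iff.mp hu with h | h
      · exact isUnit_iff_norm.mpr h
      · have := norm_nonneg x; omega
    · intro p hp hdvd
      obtain ⟨k, hk⟩ := hdvd
      have : (p : ℤ) * (p : ℤ) ∣ norm n :=
        ⟨norm k, by rw [hk, norm_mul, norm_natCast]; ring⟩
      have hu := hN _ this
      rcases Int.isUnit_iff.mp hu with h | h <;>
        · have h2 := hp.two_le
          have : (2 : ℤ) ≤ (p : ℤ) := by exact_mod_cast h2
          omega
  · rintro ⟨hsf, hratp⟩
    rw [← Int.squarefree_natAbs, Nat.squarefree_iff_prime_squarefree]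
    intro p hp hpdvd
    exfalso
    have hNnonneg := norm_nonneg n
    have hpdvdZ : (p : ℤ) ^ 2 ∣ norm n := by
      have h0 : ((p * p : ℕ) : ℤ) ∣ (((norm n).natAbs : ℕ) : ℤ) :=
        Int.natCast_dvd_natCast.mpr hpdvd
      rw [Int.natAbs_of_nonneg hNnonneg] at h0
      have : ((p * p : ℕ) : ℤ) = (p : ℤ) ^ 2 := by push_cast; ring
      rwa [this] at h0
    have hpd1 : (p : ℤ) ∣ norm n := dvd_trans (dvd_pow_self _ two_ne_zero) hpdvdZ
    have hp3 : p ≠ 3 := by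
      rintro rfl
      have := h3.isUnit_of_dvd' hpd1 (by norm_num)
      rcases Int.isUnit_iff.mp this with h | h <;> norm_num at h
    have hnp : ¬ ((p : Eisenstein) ∣ n) := hratp p hp
    have hcast2 : ((p : Eisenstein)) ^ 2 ∣ n * conj n := by
      obtain ⟨k, hk⟩ := hpdvdZ
      refine ⟨(k : Eisenstein), ?_⟩
      rw [mul_conj, hk]
      push_cast
      ring
    have hmod : p % 3 = 0 ∨ p % 3 = 1 ∨ p % 3 = 2 := by omega
    rcases hmod with h | h | h
    · have : (3 : ℕ) ∣ p := by omega
      exact hp3 ((Nat.prime_dvd_prime_iff_eq Nat.prime_three hp).mp this).symm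
    · obtain ⟨π, hπ, hnormπ⟩ := exists_prime_norm_eq hp h
      have hππ : π * conj π = (p : Eisenstein) := by
        rw [mul_conj, hnormπ]
        push_cast
        ring
      have hπdvd : π ∣ n * conj n := by
        refine dvd_trans ⟨conj π, hππ.symm⟩ ?_
        exact dvd_trans (dvd_pow_self _ two_ne_zero) hcast2
      rcases hπ.2.2 _ _ hπdvd with hd | hd
      · exact no_sq hsf hπ hππ hd hcast2 hnp
      · have hd' : conj π ∣ n := by have := conj_dvd hd; rwa [conj_conj] at this
        refine no_sq hsf (prime_conj hπ) ?_ hd' hcast2 hnp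
        rw [conj_conj, mul_comm]
        exact hππ
    · have hprime := prime_of_two_mod_three hp h
      have : (p : Eisenstein) ∣ n * conj n :=
        dvd_trans (dvd_pow_self _ two_ne_zero) hcast2
      rcases hprime.2.2 _ _ this with hd | hd
      · exact hnp hd
      · apply hnp
        have := conj_dvd hd
        rwa [conj_conj, conj_natCast] at this
end

section
/- Assume the eighth moment bound Σ_{q ≤ Q} Σ*_{χ mod q} |L(1/2,χ)|^8 ≪ Q^{2+ε} over all primitive Dirichlet characters, and the first moment lower bound Σ over primitive cubic characters of conductor ≤ Q of |L(1/2,χ)| ≫ Q. Then the number N₃(Q) of primitive cubic Dirichlet characters χ of conductor ≤ Q with L(1/2,χ) ≠ 0 satisfies N₃(Q) ≫ Q^{6/7-ε}. -/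
open DirichletCharacter in
/-- Assuming the eighth moment bound `Σ_{q ≤ Q} Σ*_{χ (q)} |L(1/2,χ)|⁸ ≪_ε Q^{2+ε}` over all
primitive Dirichlet characters and the first moment lower bound `Σ |L(1/2,χ)| ≫ Q` over
primitive cubic characters of conductor `≤ Q`, the number `N₃(Q)` of primitive cubic Dirichlet
characters of conductor `≤ Q` with `L(1/2,χ) ≠ 0` satisfies `N₃(Q) ≫_ε Q^{6/7-ε}`.
(Moduli `q ≥ 1` are written as `q = r + 1` with `r ∈ [0, Q)`.) -/
theorem statement_17 [inst : ∀ p : Prop, Decidable p]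
    (h8 : ∀ ε : ℝ, 0 < ε → ∃ C : ℝ, 0 < C ∧ ∀ Q : ℕ, 1 ≤ Q →
      (∑ r ∈ Finset.range Q, ∑' χ : DirichletCharacter ℂ (r + 1),
        (if χ.IsPrimitive then ‖LFunction χ (1 / 2)‖ ^ 8 else 0))
        ≤ C * (Q : ℝ) ^ ((2 : ℝ) + ε))
    (h1 : ∃ c : ℝ, 0 < c ∧ ∀ Q : ℕ, 1 ≤ Q →
      c * (Q : ℝ) ≤ ∑ r ∈ Finset.range Q, ∑' χ : DirichletCharacter ℂ (r + 1),
        (if χ.IsPrimitive ∧ χ ^ 3 = 1 ∧ χ ≠ 1 then ‖LFunction χ (1 / 2)‖ else 0)) :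
    ∀ ε : ℝ, 0 < ε → ∃ c' : ℝ, 0 < c' ∧ ∀ Q : ℕ, 1 ≤ Q →
      c' * (Q : ℝ) ^ ((6 : ℝ) / 7 - ε) ≤
        (Nat.card {x : Σ r : ℕ, DirichletCharacter ℂ (r + 1) //
          x.1 + 1 ≤ Q ∧ x.2.IsPrimitive ∧ x.2 ^ 3 = 1 ∧ x.2 ≠ 1 ∧
            LFunction x.2 (1 / 2) ≠ 0} : ℝ) := by
  obtain ⟨c, hc, hc1⟩ := h1
  intro ε hε
  obtain ⟨C, hC, hC8⟩ := h8 (7 * ε) (by positivity)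
  refine ⟨(c ^ 8 / C) ^ ((1 : ℝ) / 7), by positivity, fun Q hQ => ?_⟩
  have hQR : (1 : ℝ) ≤ (Q : ℝ) := by exact_mod_cast hQ
  have hQ0 : (0 : ℝ) < (Q : ℝ) := lt_of_lt_of_le one_pos hQR
  -- the big finset of pairs (r, χ) with r < Q
  set S : Finset (Σ r : ℕ, DirichletCharacter ℂ (r + 1)) :=
    (Finset.range Q).sigma fun _ => Finset.univ with hS
  set P : (Σ r : ℕ, DirichletCharacter ℂ (r + 1)) → Prop := fun x =>
    x.2.IsPrimitive ∧ x.2 ^ 3 = 1 ∧ x.2 ≠ 1 ∧ LFunction x.2 (1 / 2) ≠ 0 with hP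
  set T : Finset (Σ r : ℕ, DirichletCharacter ℂ (r + 1)) := S.filter P with hT
  set N : ℝ := (T.card : ℝ) with hN
  have hN0 : 0 ≤ N := Nat.cast_nonneg _
  -- convert the tsums in the hypotheses to sums over S
  have hsum1 : (∑ r ∈ Finset.range Q, ∑' χ : DirichletCharacter ℂ (r + 1),
      (if χ.IsPrimitive ∧ χ ^ 3 = 1 ∧ χ ≠ 1 then ‖LFunction χ (1 / 2)‖ else 0))
      = ∑ x ∈ T, ‖LFunction x.2 (1 / 2)‖ := by
    rw [hT, Finset.sum_filter]
    rw [hS, Finset.sum_sigma]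
    refine Finset.sum_congr rfl fun r _ => ?_
    rw [tsum_fintype]
    refine Finset.sum_congr rfl fun χ _ => ?_
    have key : ∀ (A : Prop) (z : ℂ), (if A then ‖z‖ else 0) = (if A ∧ z ≠ 0 then ‖z‖ else 0) := by
      intro A z
      by_cases hz : z = 0
      · subst hz; simp
      · simp [hz]
    rw [key (χ.IsPrimitive ∧ χ ^ 3 = 1 ∧ χ ≠ 1) (LFunction χ (1 / 2))]
    simp only [hP]
    exact if_congr (by tauto) rfl rfl
  have hsum8 : (∑ r ∈ Finset.range Q, ∑' χ : DirichletCharacter ℂ (r + 1),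
      (if χ.IsPrimitive then ‖LFunction χ (1 / 2)‖ ^ 8 else 0))
      = ∑ x ∈ S, (if x.2.IsPrimitive then ‖LFunction x.2 (1 / 2)‖ ^ 8 else 0) := by
    rw [hS, Finset.sum_sigma]
    exact Finset.sum_congr rfl fun r _ => by rw [tsum_fintype]
  have hT1 : c * (Q : ℝ) ≤ ∑ x ∈ T, ‖LFunction x.2 (1 / 2)‖ := by
    rw [← hsum1]; exact hc1 Q hQ
  have hT8 : ∑ x ∈ T, ‖LFunction x.2 (1 / 2)‖ ^ 8 ≤ C * (Q : ℝ) ^ ((2 : ℝ) + 7 * ε) := by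
    refine le_trans ?_ (hsum8 ▸ hC8 Q hQ)
    rw [hT, Finset.sum_filter]
    refine Finset.sum_le_sum fun x _ => ?_
    split_ifs with h1 h2
    · exact le_rfl
    · exact absurd h1.1 h2
    · positivity
    · exact le_rfl
  -- Hölder (power mean) inequality
  have holder : (∑ x ∈ T, ‖LFunction x.2 (1 / 2)‖) ^ 8 ≤
      N ^ 7 * ∑ x ∈ T, ‖LFunction x.2 (1 / 2)‖ ^ 8 :=
    pow_sum_le_card_mul_sum_pow (fun _ _ => norm_nonneg _) 7
  have hchain : (c * (Q : ℝ)) ^ 8 ≤ N ^ 7 * (C * (Q : ℝ) ^ ((2 : ℝ) + 7 * ε)) := by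
    calc (c * (Q : ℝ)) ^ 8 ≤ (∑ x ∈ T, ‖LFunction x.2 (1 / 2)‖) ^ 8 :=
          pow_le_pow_left₀ (by positivity) hT1 8
      _ ≤ N ^ 7 * ∑ x ∈ T, ‖LFunction x.2 (1 / 2)‖ ^ 8 := holder
      _ ≤ N ^ 7 * (C * (Q : ℝ) ^ ((2 : ℝ) + 7 * ε)) :=
          mul_le_mul_of_nonneg_left hT8 (by positivity)
  -- identify the Nat.card with T.card
  have hcard : (Nat.card {x : Σ r : ℕ, DirichletCharacter ℂ (r + 1) //
      x.1 + 1 ≤ Q ∧ x.2.IsPrimitive ∧ x.2 ^ 3 = 1 ∧ x.2 ≠ 1 ∧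
        LFunction x.2 (1 / 2) ≠ 0} : ℝ) = N := by
    have hiff : ∀ x : Σ r : ℕ, DirichletCharacter ℂ (r + 1),
        (x.1 + 1 ≤ Q ∧ x.2.IsPrimitive ∧ x.2 ^ 3 = 1 ∧ x.2 ≠ 1 ∧
          LFunction x.2 (1 / 2) ≠ 0) ↔ x ∈ T := by
      intro x
      simp only [hT, Finset.mem_filter, hS, Finset.mem_sigma, Finset.mem_univ, and_true,
        Finset.mem_range, hP, Nat.lt_iff_add_one_le]
    rw [Nat.card_congr (Equiv.subtypeEquivRight hiff), Nat.card_eq_fintype_card,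
      Fintype.card_coe, hN]
  rw [hcard]
  -- final real-power arithmetic
  refine le_of_pow_le_pow_left₀ (n := 7) (by norm_num) hN0 ?_
  have e1 : ((c ^ 8 / C) ^ ((1 : ℝ) / 7) * (Q : ℝ) ^ ((6 : ℝ) / 7 - ε)) ^ (7 : ℕ)
      = (c ^ 8 / C) * (Q : ℝ) ^ ((6 : ℝ) - 7 * ε) := by
    have h1 : ((c ^ 8 / C) ^ ((1 : ℝ) / 7)) ^ (7 : ℕ) = c ^ 8 / C := by
      rw [← Real.rpow_natCast _ 7, ← Real.rpow_mul (by positivity)]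
      norm_num
    have h2 : ((Q : ℝ) ^ ((6 : ℝ) / 7 - ε)) ^ (7 : ℕ) = (Q : ℝ) ^ ((6 : ℝ) - 7 * ε) := by
      rw [← Real.rpow_natCast _ 7, ← Real.rpow_mul (le_of_lt hQ0)]
      congr 1
      push_cast
      ring
    rw [mul_pow, h1, h2]
  rw [e1]
  have hQ8 : (Q : ℝ) ^ ((6 : ℝ) - 7 * ε) * (Q : ℝ) ^ ((2 : ℝ) + 7 * ε) = (Q : ℝ) ^ (8 : ℕ) := by
    rw [← Real.rpow_add hQ0, ← Real.rpow_natCast (Q : ℝ) 8]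
    congr 1
    push_cast
    ring
  rw [div_mul_eq_mul_div, div_le_iff₀ hC]
  have hpos : (0 : ℝ) < (Q : ℝ) ^ ((2 : ℝ) + 7 * ε) := Real.rpow_pos_of_pos hQ0 _
  refine le_of_mul_le_mul_right ?_ hpos
  calc c ^ 8 * (Q : ℝ) ^ ((6 : ℝ) - 7 * ε) * (Q : ℝ) ^ ((2 : ℝ) + 7 * ε)
      = (c * (Q : ℝ)) ^ 8 := by rw [mul_assoc, hQ8, mul_pow]
    _ ≤ N ^ 7 * (C * (Q : ℝ) ^ ((2 : ℝ) + 7 * ε)) := hchain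
    _ = N ^ 7 * C * (Q : ℝ) ^ ((2 : ℝ) + 7 * ε) := by ring
end
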